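/- For every integer n ≥ 2, one has Σ_{k=1}^{n−1} (sin(πk/n))^{−2} = (n²−1)/3. -/

import Mathlib

open Finset Complex

lemma orth {n : ℕ} (w : ℂ) (hw : w ^ n = 1) :
    ∑ k ∈ range n, w ^ k = if w = 1 then (n : ℂ) else 0 := by
  split_ifs with h
  · simp [h]
  · rw [geom_sum_eq h, hw, sub_self, zero_div]

lemma parseval {n : ℕ} (hn : 2 ≤ n) {ζ : ℂ} (hζ : IsPrimitiveRoot ζ n) :
    ∑ k ∈ range n, (Complex.normSq (∑ j ∈ range n, (j:ℂ) * (ζ ^ k) ^ j) : ℝ)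
      = n * ∑ j ∈ range n, (j:ℝ) ^ 2 := by
  have hn0 : n ≠ 0 := by omega
  have hζn : ζ ^ n = 1 := hζ.pow_eq_one
  have hζ0 : ζ ≠ 0 := hζ.ne_zero hn0
  have habs : Complex.normSq ζ = 1 := by
    have h := Complex.norm_eq_one_of_pow_eq_one hζn hn0
    rw [← Complex.sq_norm, h]; norm_num
  have hconj : (starRingEnd ℂ) ζ = ζ ^ (n - 1) := by
    have h1 : (starRingEnd ℂ) ζ * ζ = 1 := by
      rw [mul_comm, Complex.mul_conj, habs]; norm_num
    have h2 : ζ ^ (n - 1) * ζ = 1 := by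
      rw [← pow_succ, Nat.sub_add_cancel (by omega), hζn]
    exact mul_right_cancel₀ hζ0 (h1.trans h2.symm)
  -- dvd criterion
  have key : ∀ j < n, ∀ l < n, (ζ ^ (j + (n-1) * l) = 1 ↔ j = l) := by
    intro j hj l hl
    rw [hζ.pow_eq_one_iff_dvd]
    constructor
    · intro h
      have h2 : (n:ℤ) ∣ (j:ℤ) - l := by
        obtain ⟨c, hc⟩ := h
        refine ⟨c - l, ?_⟩
        have hn1 : ((n-1 : ℕ) : ℤ) = (n:ℤ) - 1 := by
          push_cast [Nat.cast_sub (by omega : 1 ≤ n)]; ring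
        have : (j:ℤ) + ((n-1:ℕ):ℤ) * l = n * c := by exact_mod_cast hc
        rw [hn1] at this
        linarith [this]
      obtain ⟨c, hc⟩ := h2
      have hj' : (j:ℤ) < n := by exact_mod_cast hj
      have hl' : (l:ℤ) < n := by exact_mod_cast hl
      have hnz : (0:ℤ) < n := by exact_mod_cast (by omega : 0 < n)
      have hc0 : c = 0 := by
        by_contra hc0
        rcases lt_or_gt_of_ne hc0 with h' | h'
        · have : (n:ℤ) * c ≤ n * (-1) := by
            apply mul_le_mul_of_nonneg_left (by omega) (by omega)
          have hjge : (0:ℤ) ≤ j := by positivity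
          linarith
        · have : (n:ℤ) * 1 ≤ n * c := by
            apply mul_le_mul_of_nonneg_left (by omega) (by omega)
          have hlge : (0:ℤ) ≤ l := by positivity
          linarith
      have : (j:ℤ) = l := by rw [hc0] at hc; linarith
      exact_mod_cast this
    · rintro rfl
      refine ⟨j, ?_⟩
      have h1 : (n-1) * j = n * j - j := Nat.sub_one_mul n j
      have h2 : j ≤ n * j := Nat.le_mul_of_pos_left j (by omega)
      omega
  apply Complex.ofReal_injective
  push_cast
  have step1 : ∀ k ∈ range n,
      ((Complex.normSq (∑ j ∈ range n, (j:ℂ) * (ζ ^ k) ^ j) : ℝ) : ℂ)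
      = ∑ j ∈ range n, ∑ l ∈ range n,
          ((j:ℂ) * l) * (ζ ^ (j + (n-1) * l)) ^ k := by
    intro k _
    rw [← Complex.mul_conj, map_sum, sum_mul_sum]
    refine sum_congr rfl fun j _ => sum_congr rfl fun l _ => ?_
    rw [map_mul, map_natCast, map_pow, map_pow, hconj]
    rw [← pow_mul, ← pow_mul, ← pow_mul, ← pow_mul]
    rw [show (j + (n-1) * l) * k = k * j + (n-1) * k * l by ring, pow_add]
    ring
  rw [sum_congr rfl step1, Finset.sum_comm]
  have step2 : ∀ j ∈ range n,
      (∑ k ∈ range n, ∑ l ∈ range n, ((j:ℂ) * l) * (ζ ^ (j + (n-1) * l)) ^ k)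
      = (j:ℂ) * j * n := by
    intro j hj
    rw [Finset.sum_comm]
    have inner : ∀ l ∈ range n,
        (∑ k ∈ range n, ((j:ℂ) * l) * (ζ ^ (j + (n-1) * l)) ^ k)
        = if j = l then (j:ℂ) * l * n else 0 := by
      intro l hl
      rw [← mul_sum]
      have hw : (ζ ^ (j + (n-1) * l)) ^ n = 1 := by
        rw [← pow_mul, mul_comm, pow_mul, hζn, one_pow]
      rw [orth _ hw]
      rw [mem_range] at hj hl
      simp only [key j hj l hl]
      split_ifs with h
      · ring
      · ring
    rw [sum_congr rfl inner, Finset.sum_ite_eq]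
    simp only [hj, if_true]
  rw [sum_congr rfl step2, mul_sum]
  refine sum_congr rfl fun j _ => ?_
  ring

lemma keyB {n : ℕ} (w : ℂ) (hw : w ^ n = 1) (h1 : w ≠ 1) :
    (w - 1) * ∑ j ∈ range n, (j : ℂ) * w ^ j = n := by
  have gen : ∀ m : ℕ, (w - 1) * ∑ j ∈ range m, (j : ℂ) * w ^ j
      = (m - 1) * w ^ m - ∑ j ∈ range m, w ^ j + 1 := by
    intro m
    induction m with
    | zero => simp
    | succ m ih =>
      rw [sum_range_succ, mul_add, ih, sum_range_succ]
      push_cast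
      ring
  have hg : ∑ j ∈ range n, w ^ j = 0 := by
    rw [geom_sum_eq h1, hw, sub_self, zero_div]
  rw [gen n, hw, hg]
  ring

lemma sumsq (n : ℕ) : ∑ j ∈ range n, (j : ℝ) ^ 2 = n * (n - 1) * (2 * n - 1) / 6 := by
  induction n with
  | zero => simp
  | succ m ih => rw [sum_range_succ, ih]; push_cast; ring

lemma gauss (n : ℕ) : ∑ j ∈ range n, (j : ℝ) = n * (n - 1) / 2 := by
  induction n with
  | zero => simp
  | succ m ih => rw [sum_range_succ, ih]; push_cast; ring

lemma normSq_exp_sub_one (θ : ℝ) :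
    Complex.normSq (Complex.exp ((θ:ℂ) * Complex.I) - 1) = 2 - 2 * Real.cos θ := by
  rw [Complex.exp_mul_I]
  simp [Complex.normSq_apply, Complex.cos_ofReal_re, Complex.sin_ofReal_re]
  nlinarith [Real.sin_sq_add_cos_sq θ]

lemma point {n : ℕ} (hn : 2 ≤ n) {k : ℕ} (hk1 : 1 ≤ k) (hkn : k < n) :
    Real.sin (Real.pi * k / n) ^ (-2 : ℤ)
      = 4 / Complex.normSq (Complex.exp (2 * Real.pi * Complex.I / n) ^ k - 1) := by
  have hn0 : (0:ℝ) < n := by positivity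
  have hx0 : 0 < Real.pi * k / n := by
    have : (0:ℝ) < k := by exact_mod_cast hk1
    positivity
  have hxpi : Real.pi * k / n < Real.pi := by
    rw [div_lt_iff₀ hn0]
    have hk' : (k:ℝ) < n := by exact_mod_cast hkn
    nlinarith [Real.pi_pos]
  have hs : 0 < Real.sin (Real.pi * k / n) := Real.sin_pos_of_pos_of_lt_pi hx0 hxpi
  have hz : Complex.exp (2 * Real.pi * Complex.I / n) ^ k
      = Complex.exp ((2 * Real.pi * k / n : ℝ) * Complex.I) := by
    rw [← Complex.exp_nat_mul]
    congr 1
    push_cast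
    ring
  have hns : Complex.normSq (Complex.exp (2 * Real.pi * Complex.I / n) ^ k - 1)
      = 4 * Real.sin (Real.pi * k / n) ^ 2 := by
    rw [hz, normSq_exp_sub_one]
    have := Real.sin_sq_eq_half_sub (Real.pi * k / n)
    have h2 : 2 * (Real.pi * k / n) = 2 * Real.pi * k / n := by ring
    rw [h2] at this
    linarith
  rw [hns, zpow_neg, zpow_two]
  rw [eq_div_iff (by positivity)]
  field_simp

open Finset Real

/-- For every integer `n ≥ 2`, `∑_{k=1}^{n-1} (sin (π k / n))⁻² = (n² - 1)/3`. -/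
theorem sum_inv_sq_sin (n : ℕ) (hn : 2 ≤ n) :
    ∑ k ∈ Finset.Ico 1 n, (Real.sin (Real.pi * k / n)) ^ (-2 : ℤ) =
      ((n : ℝ) ^ 2 - 1) / 3 := by
  have hn0 : n ≠ 0 := by omega
  have hnR : (n:ℝ) ≠ 0 := by positivity
  set ζ : ℂ := Complex.exp (2 * Real.pi * Complex.I / n) with hζdef
  have hζ : IsPrimitiveRoot ζ n := Complex.isPrimitiveRoot_exp n hn0
  have hζn : ζ ^ n = 1 := hζ.pow_eq_one
  have main : ∀ k ∈ Finset.Ico 1 n,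
      Real.sin (Real.pi * k / n) ^ (-2:ℤ)
      = 4 * Complex.normSq (∑ j ∈ range n, (j:ℂ) * (ζ ^ k) ^ j) / (n:ℝ)^2 := by
    intro k hk
    rw [Finset.mem_Ico] at hk
    rw [point hn hk.1 hk.2]
    have hw : (ζ ^ k) ^ n = 1 := by rw [← pow_mul, mul_comm, pow_mul, hζn, one_pow]
    have hw1 : ζ ^ k ≠ 1 := by
      intro h
      have hd := (hζ.pow_eq_one_iff_dvd k).mp h
      have := Nat.le_of_dvd (by omega) hd
      omega
    have hB := keyB (ζ ^ k) hw hw1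
    have hB2 := congrArg Complex.normSq hB
    rw [map_mul, Complex.normSq_natCast] at hB2
    have hA : Complex.normSq (ζ ^ k - 1) ≠ 0 := by
      intro h0
      rw [h0, zero_mul] at hB2
      have : (n:ℝ) = 0 := by nlinarith
      exact hnR this
    rw [div_eq_div_iff hA (pow_ne_zero 2 hnR)]
    rw [show ((n:ℝ))^2 = (n:ℝ)*(n:ℝ) by ring, ← hB2]
    ring
  rw [Finset.sum_congr rfl main]
  have hsplit : ∑ k ∈ range n, (Complex.normSq (∑ j ∈ range n, (j:ℂ) * (ζ ^ k) ^ j) : ℝ)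
      = Complex.normSq (∑ j ∈ range n, (j:ℂ) * (ζ ^ 0) ^ j)
        + ∑ k ∈ Finset.Ico 1 n, Complex.normSq (∑ j ∈ range n, (j:ℂ) * (ζ ^ k) ^ j) := by
    rw [Finset.range_eq_Ico, Finset.sum_eq_sum_Ico_succ_bot (by omega : 0 < n)]
  have hS0 : Complex.normSq (∑ j ∈ range n, (j:ℂ) * (ζ ^ 0) ^ j)
      = ((n:ℝ) * (n - 1) / 2) ^ 2 := by
    simp only [pow_zero, one_pow, mul_one]
    rw [show (∑ j ∈ range n, (j:ℂ)) = (((∑ j ∈ range n, (j:ℝ)) : ℝ) : ℂ) by push_cast; rfl]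
    rw [Complex.normSq_ofReal, gauss]
    ring
  have hP := parseval hn hζ
  have hIco : ∑ k ∈ Finset.Ico 1 n, (Complex.normSq (∑ j ∈ range n, (j:ℂ) * (ζ ^ k) ^ j) : ℝ)
      = (n:ℝ) * ((n:ℝ) * (n - 1) * (2 * n - 1) / 6) - ((n:ℝ) * (n - 1) / 2) ^ 2 := by
    rw [← sumsq, ← hP, hsplit, hS0]
    ring
  rw [← Finset.sum_div, ← Finset.mul_sum, hIco]
  field_simp
  ring
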